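/- Fix positive integers n, r, ℓ and p ∈ [0,1], and let N_r be the number of vertices at graph distance at most r from a given fixed vertex in an Erdős–Rényi random graph on n vertices with edge probability p. Then ‖N_r‖_ℓ ≤ (A(np, ℓ)^{r+1} − 1)/(A(np, ℓ) − 1) ≤ 2·A(np, ℓ)^r, where ‖N_r‖_ℓ := (E[N_r^ℓ])^{1/ℓ}. -/

import Mathlib

open MeasureTheory ProbabilityTheory Real

/-- The constant `A(x, ℓ) = π e^{e−2}·(ℓ/log(e−1))` if `ℓ > x`, and `π e^{e−2}·x` if `ℓ ≤ x`. -/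
noncomputable def Aconst (x : ℝ) (ℓ : ℕ) : ℝ :=
  if x < ℓ then π * Real.exp (Real.exp 1 - 2) * ℓ / Real.log (Real.exp 1 - 1)
  else π * Real.exp (Real.exp 1 - 2) * x

/-- The simple graph on `Fin n` determined by a family of edge indicators. -/
def graphOf {n : ℕ} (ω : Sym2 (Fin n) → Bool) : SimpleGraph (Fin n) where
  Adj i j := i ≠ j ∧ ω s(i, j) = true
  symm := by
    refine ⟨?_⟩
    intro i j h
    exact ⟨h.1.symm, by rw [Sym2.eq_swap]; exact h.2⟩
  loopless := by refine ⟨?_⟩; intro i h; exact h.1 rfl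

/-- The set of vertices at graph distance at most `r` from `i`. -/
def ball {n : ℕ} (G : SimpleGraph (Fin n)) (i : Fin n) (r : ℕ) : Set (Fin n) :=
  {v | ∃ p : G.Walk i v, p.length ≤ r}

namespace ErdosRenyiAux
open scoped ENNReal NNReal

lemma nat_sub_one_div {k j : ℕ} (hj : j % k ≠ 0) : (j-1)/k = j/k := by
  rcases Nat.eq_zero_or_pos k with rfl|hk
  · simp
  · have h0 := Nat.div_add_mod j k
    have h1 : j % k < k := Nat.mod_lt _ hk
    set a := k * (j / k) with ha
    have h2 : j - 1 = a + (j % k - 1) := by omega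
    have h3 : (a + (j % k - 1))/k = j/k := by
      rw [ha, Nat.mul_add_div hk, Nat.div_eq_of_lt (show j % k - 1 < k by omega), Nat.add_zero]
    rw [h2, h3]

lemma nat_sub_one_mod {k j : ℕ} (hj : j % k ≠ 0) : (j-1)%k = j%k - 1 := by
  rcases Nat.eq_zero_or_pos k with rfl|hk
  · simp
  · have h0 := Nat.div_add_mod j k
    have h1 : j % k < k := Nat.mod_lt _ hk
    set a := k * (j / k) with ha
    have h2 : j - 1 = a + (j % k - 1) := by omega
    rw [h2, ha, Nat.mul_add_mod, Nat.mod_eq_of_lt (show j % k - 1 < k by omega)]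

variable {n : ℕ}

/-- previous vertex at step `j` in the block decomposition with blocks of size `k` -/
def prevV (i : Fin n) (k : ℕ) {m : ℕ} (g : Fin m → Fin n) (j : Fin m) : Fin n :=
  if j.1 % k = 0 then i else g ⟨j.1 - 1, lt_of_le_of_lt (Nat.sub_le _ _) j.isLt⟩

def pedge (i : Fin n) (k : ℕ) {m : ℕ} (g : Fin m → Fin n) (j : Fin m) : Sym2 (Fin n) :=
  s(prevV i k g j, g j)

def pE (i : Fin n) (k : ℕ) {m : ℕ} (g : Fin m → Fin n) : Finset (Sym2 (Fin n)) :=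
  Finset.image (pedge i k g) Finset.univ

def pOK (i : Fin n) (k : ℕ) {m : ℕ} (g : Fin m → Fin n) : Prop :=
  (∀ j, g j ≠ i) ∧ ∀ j j' : Fin m, j.1 / k = j'.1 / k → g j = g j' → j = j'

instance (i : Fin n) (k : ℕ) {m : ℕ} (g : Fin m → Fin n) : Decidable (pOK i k g) := by
  unfold pOK; infer_instance

noncomputable def wsum (i : Fin n) (k : ℕ) (q : ℝ≥0∞) (m : ℕ) : ℝ≥0∞ :=
  ∑ g : Fin m → Fin n, if pOK i k g then q ^ (pE i k g).card else 0

variable {i : Fin n} {k : ℕ}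

lemma snoc_lt {m : ℕ} (h : Fin m → Fin n) (w : Fin n) (j : Fin (m+1)) (hj : j.1 < m) :
    (Fin.snoc h w : Fin (m+1) → Fin n) j = h ⟨j.1, hj⟩ := by
  have h2 : (Fin.snoc h w : Fin (m+1) → Fin n) (Fin.castSucc ⟨j.1, hj⟩) = h ⟨j.1, hj⟩ :=
    Fin.snoc_castSucc _ _ _
  rw [← h2]
  exact congrArg _ (Fin.ext rfl)

lemma prevV_snoc {m : ℕ} (h : Fin m → Fin n) (w : Fin n) (j : Fin m) :
    prevV i k (Fin.snoc h w) (Fin.castSucc j) = prevV i k h j := by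
  unfold prevV
  rcases eq_or_ne (j.1 % k) 0 with h0|h0
  · simp [h0]
  · rw [if_neg (by simpa using h0), if_neg h0]
    rw [snoc_lt h w _ (lt_of_le_of_lt (Nat.sub_le _ _) j.isLt)]
    exact congrArg h (Fin.ext rfl)

lemma pedge_snoc {m : ℕ} (h : Fin m → Fin n) (w : Fin n) (j : Fin m) :
    pedge i k (Fin.snoc h w) (Fin.castSucc j) = pedge i k h j := by
  unfold pedge
  rw [prevV_snoc, Fin.snoc_castSucc]

/-- the previous vertex of the new (last) step, only depends on `h` -/
def lastPrev (i : Fin n) (k : ℕ) {m : ℕ} (h : Fin m → Fin n) : Fin n :=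
  if hm : m % k = 0 then i
  else h ⟨m - 1, Nat.sub_lt (Nat.pos_of_ne_zero fun h0 => hm (h0 ▸ Nat.zero_mod k)) one_pos⟩

lemma prevV_last {m : ℕ} (h : Fin m → Fin n) (w : Fin n) :
    prevV i k (Fin.snoc h w) (Fin.last m) = lastPrev i k h := by
  unfold prevV lastPrev
  rcases eq_or_ne (m % k) 0 with h0|h0
  · simp [h0]
  · rw [if_neg (by simpa using h0), dif_neg h0]
    rw [snoc_lt h w _ (Nat.sub_lt (Nat.pos_of_ne_zero fun hh => h0 (hh ▸ Nat.zero_mod k)) one_pos)]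
    exact congrArg h (Fin.ext rfl)

lemma pedge_snoc_last {m : ℕ} (h : Fin m → Fin n) (w : Fin n) :
    pedge i k (Fin.snoc h w) (Fin.last m) = s(lastPrev i k h, w) := by
  unfold pedge
  rw [prevV_last, Fin.snoc_last]

lemma pE_snoc {m : ℕ} (h : Fin m → Fin n) (w : Fin n) :
    pE i k (Fin.snoc h w) = insert (s(lastPrev i k h, w)) (pE i k h) := by
  classical
  ext e
  simp only [pE, Finset.mem_image, Finset.mem_insert, Finset.mem_univ, true_and]
  constructor
  · rintro ⟨j, rfl⟩
    rcases Nat.lt_or_ge j.1 m with hj|hj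
    · right
      refine ⟨⟨j.1, hj⟩, ?_⟩
      rw [← pedge_snoc h w ⟨j.1, hj⟩]
      exact congrArg _ (Fin.ext rfl)
    · left
      have : j = Fin.last m := by ext; simpa using Nat.le_antisymm (Nat.lt_succ_iff.mp j.isLt) hj
      rw [this, pedge_snoc_last]
  · rintro (rfl | ⟨j, rfl⟩)
    · exact ⟨Fin.last m, pedge_snoc_last h w⟩
    · exact ⟨Fin.castSucc j, pedge_snoc h w j⟩

end ErdosRenyiAux

section Part2
namespace ErdosRenyiAux
variable {n : ℕ} {i : Fin n} {k : ℕ}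

lemma pOK_restrict {m : ℕ} {h : Fin m → Fin n} {w : Fin n}
    (H : pOK i k (Fin.snoc h w : Fin (m+1) → Fin n)) : pOK i k h := by
  constructor
  · intro j
    have := H.1 (Fin.castSucc j)
    rwa [Fin.snoc_castSucc] at this
  · intro j j' hb he
    have := H.2 (Fin.castSucc j) (Fin.castSucc j') hb
      (by rwa [Fin.snoc_castSucc, Fin.snoc_castSucc])
    exact Fin.castSucc_injective _ this

lemma pOK_snoc_iff {m : ℕ} {h : Fin m → Fin n} {w : Fin n} :
    pOK i k (Fin.snoc h w : Fin (m+1) → Fin n) ↔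
      pOK i k h ∧ w ≠ i ∧ ∀ j : Fin m, j.1 / k = m / k → h j ≠ w := by
  constructor
  · intro H
    refine ⟨pOK_restrict H, ?_, ?_⟩
    · have := H.1 (Fin.last m); rwa [Fin.snoc_last] at this
    · intro j hb he
      have h2 := H.2 (Fin.castSucc j) (Fin.last m) (by simpa using hb)
        (by rw [Fin.snoc_castSucc, Fin.snoc_last]; exact he)
      have := congrArg Fin.val h2
      simp only [Fin.coe_castSucc, Fin.val_last] at this
      exact absurd this (Nat.ne_of_lt j.isLt)
  · rintro ⟨H1, H2, H3⟩
    constructor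
    · intro j
      rcases Nat.lt_or_ge j.1 m with hj|hj
      · rw [snoc_lt h w j hj]; exact H1.1 _
      · have : j = Fin.last m := Fin.ext (by have := j.isLt; simp; omega)
        rw [this, Fin.snoc_last]; exact H2
    · intro j j' hb he
      rcases Nat.lt_or_ge j.1 m with hj|hj <;> rcases Nat.lt_or_ge j'.1 m with hj'|hj'
      · rw [snoc_lt h w j hj, snoc_lt h w j' hj'] at he
        have := H1.2 ⟨j.1, hj⟩ ⟨j'.1, hj'⟩ hb he
        exact Fin.ext (by simpa using this)
      · have hj'm : j'.1 = m := by have := j'.isLt; omega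
        rw [snoc_lt h w j hj] at he
        have : (Fin.snoc h w : Fin (m+1) → Fin n) j' = w := by
          have : j' = Fin.last m := Fin.ext (by simpa using hj'm)
          rw [this, Fin.snoc_last]
        rw [this] at he
        exact absurd he (H3 ⟨j.1, hj⟩ (by rw [hj'm] at hb; exact hb))
      · have hjm : j.1 = m := by have := j.isLt; omega
        rw [snoc_lt h w j' hj'] at he
        have : (Fin.snoc h w : Fin (m+1) → Fin n) j = w := by
          have : j = Fin.last m := Fin.ext (by simpa using hjm)
          rw [this, Fin.snoc_last]
        rw [this] at he
        exact absurd he.symm (H3 ⟨j'.1, hj'⟩ (by rw [hjm] at hb; exact hb.symm))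
      · have : j.1 = m := by have := j.isLt; omega
        have h2 : j'.1 = m := by have := j'.isLt; omega
        exact Fin.ext (by omega)

lemma prevV_ne {m : ℕ} {h : Fin m → Fin n} (hOK : pOK i k h) (j : Fin m) :
    prevV i k h j ≠ h j := by
  unfold prevV
  split_ifs with h0
  · exact fun e => hOK.1 j e.symm
  · intro e
    have hj0 : j.1 ≠ 0 := fun hh => h0 (by rw [hh]; exact Nat.zero_mod k)
    have := hOK.2 ⟨j.1 - 1, lt_of_le_of_lt (Nat.sub_le _ _) j.isLt⟩ j
      (nat_sub_one_div h0) e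
    have := congrArg Fin.val this
    simp only at this
    omega

lemma prevV_injOn_block {m : ℕ} {h : Fin m → Fin n} (hOK : pOK i k h) (j j' : Fin m)
    (hb : j.1 / k = j'.1 / k) (he : prevV i k h j = prevV i k h j') : j = j' := by
  unfold prevV at he
  have e1 := Nat.div_add_mod j.1 k
  have e2 := Nat.div_add_mod j'.1 k
  split_ifs at he with o1 o2 o2
  · rw [hb] at e1
    exact Fin.ext (by omega)
  · exact absurd he.symm (hOK.1 _)
  · exact absurd he (hOK.1 _)
  · have hj0 : j.1 ≠ 0 := fun hh => o1 (by rw [hh]; exact Nat.zero_mod k)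
    have hj0' : j'.1 ≠ 0 := fun hh => o2 (by rw [hh]; exact Nat.zero_mod k)
    have hbb : (j.1 - 1) / k = (j'.1 - 1) / k := by
      rw [nat_sub_one_div o1, nat_sub_one_div o2]; exact hb
    have := hOK.2 _ _ hbb he
    have := congrArg Fin.val this
    simp only at this
    exact Fin.ext (by omega)

open Classical in
lemma card_filter_mem_pE_le {ℓ m : ℕ} {h : Fin m → Fin n} (hOK : pOK i k h)
    (hblk : ∀ j : Fin m, j.1 / k < ℓ) (v : Fin n) :
    (Finset.univ.filter fun w => s(v, w) ∈ pE i k h).card ≤ 2 * ℓ := by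
  rcases Nat.eq_zero_or_pos ℓ with rfl|hℓ
  · have : (Finset.univ.filter fun w => s(v, w) ∈ pE i k h) = ∅ := by
      refine Finset.eq_empty_of_forall_notMem fun w hw => ?_
      obtain ⟨j, -, -⟩ := Finset.mem_image.mp (Finset.mem_filter.mp hw).2
      exact absurd (hblk j) (Nat.not_lt_zero _)
    simp [this]
  -- the encoding map
  set f : Fin n → Fin ℓ × Bool := fun w =>
    if hw : s(v, w) ∈ pE i k h then
      ((⟨((Finset.mem_image.mp hw).choose).1 / k, hblk _⟩ : Fin ℓ),
        decide (h ((Finset.mem_image.mp hw).choose) = w))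
    else (⟨0, hℓ⟩, false) with hf
  have hinj : Set.InjOn f (Finset.univ.filter fun w => s(v, w) ∈ pE i k h) := by
    intro w1 hw1 w2 hw2 heq
    have m1 : s(v, w1) ∈ pE i k h := (Finset.mem_filter.mp hw1).2
    have m2 : s(v, w2) ∈ pE i k h := (Finset.mem_filter.mp hw2).2
    rw [hf] at heq
    simp only [dif_pos m1, dif_pos m2] at heq
    set j1 := (Finset.mem_image.mp m1).choose with hj1d
    set j2 := (Finset.mem_image.mp m2).choose with hj2d
    have s1 : pedge i k h j1 = s(v, w1) := (Finset.mem_image.mp m1).choose_spec.2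
    have s2 : pedge i k h j2 = s(v, w2) := (Finset.mem_image.mp m2).choose_spec.2
    have hb : j1.1 / k = j2.1 / k := congrArg Fin.val (congrArg Prod.fst heq)
    have hbo : (h j1 = w1) ↔ (h j2 = w2) := by
      have := congrArg Prod.snd heq
      simpa using this
    rw [pedge, Sym2.eq_iff] at s1 s2
    by_cases hc : h j1 = w1
    · have hc2 : h j2 = w2 := hbo.mp hc
      have p1 : prevV i k h j1 = v := by
        rcases s1 with ⟨e1, -⟩|⟨e1, e2⟩
        · exact e1
        · exact absurd (hc ▸ e1 : prevV i k h j1 = h j1) (prevV_ne hOK j1)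
      have p2 : prevV i k h j2 = v := by
        rcases s2 with ⟨e1, -⟩|⟨e1, e2⟩
        · exact e1
        · exact absurd (hc2 ▸ e1 : prevV i k h j2 = h j2) (prevV_ne hOK j2)
      have : j1 = j2 := prevV_injOn_block hOK j1 j2 hb (by rw [p1, p2])
      rw [← hc, ← hc2, this]
    · have hc2 : ¬ (h j2 = w2) := fun e => hc (hbo.mpr e)
      have p1 : h j1 = v ∧ prevV i k h j1 = w1 := by
        rcases s1 with ⟨-, e2⟩|⟨e1, e2⟩
        · exact absurd e2 hc
        · exact ⟨e2, e1⟩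
      have p2 : h j2 = v ∧ prevV i k h j2 = w2 := by
        rcases s2 with ⟨-, e2⟩|⟨e1, e2⟩
        · exact absurd e2 hc2
        · exact ⟨e2, e1⟩
      have : j1 = j2 := hOK.2 j1 j2 hb (by rw [p1.1, p2.1])
      rw [← p1.2, ← p2.2, this]
  calc (Finset.univ.filter fun w => s(v, w) ∈ pE i k h).card
      ≤ (Finset.univ : Finset (Fin ℓ × Bool)).card :=
        Finset.card_le_card_of_injOn f (fun _ _ => Finset.mem_univ _) hinj
    _ = 2 * ℓ := by
        rw [Finset.card_univ, Fintype.card_prod, Fintype.card_fin, Fintype.card_bool]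
        ring

end ErdosRenyiAux
end Part2

section Part3
namespace ErdosRenyiAux
open scoped ENNReal
variable {n : ℕ} {i : Fin n} {k : ℕ}

lemma wsum_zero (q : ℝ≥0∞) : wsum i k q 0 = 1 := by
  rw [wsum, Fintype.sum_unique]
  rw [if_pos ⟨fun j => j.elim0, fun j => j.elim0⟩]
  have : pE i k (default : Fin 0 → Fin n) = ∅ := by
    simp [pE]
  rw [this, Finset.card_empty, pow_zero]

lemma wsum_succ {q : ℝ≥0∞} (hq : q ≤ 1) {ℓ m : ℕ} (hm : m < k * ℓ) :
    wsum i k q (m+1) ≤ ((n : ℝ≥0∞) * q + 2 * ℓ) * wsum i k q m := by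
  classical
  have hk : 0 < k := by
    rcases Nat.eq_zero_or_pos k with rfl|hk
    · simp at hm
    · exact hk
  have hblk : ∀ j : Fin m, j.1 / k < ℓ := fun j => by
    rw [Nat.div_lt_iff_lt_mul hk]
    calc j.1 < m := j.isLt
      _ < k * ℓ := hm
      _ = ℓ * k := Nat.mul_comm _ _
  set C : ℝ≥0∞ := (n : ℝ≥0∞) * q + 2 * ℓ with hC
  have key : ∀ h : Fin m → Fin n,
      (∑ w : Fin n, if pOK i k (Fin.snoc h w : Fin (m+1) → Fin n)
          then q ^ (pE i k (Fin.snoc h w : Fin (m+1) → Fin n)).card else 0)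
        ≤ (if pOK i k h then q ^ (pE i k h).card else 0) * C := by
    intro h
    by_cases hOK : pOK i k h
    · rw [if_pos hOK]
      set c := (pE i k h).card with hc
      calc (∑ w : Fin n, if pOK i k (Fin.snoc h w : Fin (m+1) → Fin n)
              then q ^ (pE i k (Fin.snoc h w : Fin (m+1) → Fin n)).card else 0)
          ≤ ∑ w : Fin n, (if s(lastPrev i k h, w) ∈ pE i k h then q ^ c else q * q ^ c) := by
            refine Finset.sum_le_sum fun w _ => ?_
            by_cases hmem : s(lastPrev i k h, w) ∈ pE i k h
            · rw [if_pos hmem]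
              split_ifs with hOK2
              · rw [pE_snoc, Finset.insert_eq_self.mpr hmem]
              · exact zero_le
            · rw [if_neg hmem]
              split_ifs with hOK2
              · rw [pE_snoc, Finset.card_insert_of_notMem hmem, pow_succ]
                exact le_of_eq (mul_comm _ _)
              · exact zero_le
        _ = (Finset.univ.filter fun w => s(lastPrev i k h, w) ∈ pE i k h).card • (q ^ c)
              + (Finset.univ.filter fun w => ¬ s(lastPrev i k h, w) ∈ pE i k h).card
                  • (q * q ^ c) := by
            rw [Finset.sum_ite, Finset.sum_const, Finset.sum_const]
        _ ≤ (2 * ℓ : ℕ) • (q ^ c) + (n : ℕ) • (q * q ^ c) := by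
            refine add_le_add (nsmul_le_nsmul_left zero_le ?_)
              (nsmul_le_nsmul_left zero_le ?_)
            · exact card_filter_mem_pE_le hOK hblk _
            · calc (Finset.univ.filter fun w =>
                    ¬ s(lastPrev i k h, w) ∈ pE i k h).card
                  ≤ (Finset.univ : Finset (Fin n)).card := Finset.card_filter_le _ _
                _ = n := by rw [Finset.card_univ, Fintype.card_fin]
        _ = q ^ c * C := by
            rw [nsmul_eq_mul, nsmul_eq_mul, hC]
            push_cast
            ring
    · rw [if_neg hOK, zero_mul]
      refine le_of_eq (Finset.sum_eq_zero fun w _ => ?_)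
      exact if_neg fun hc => hOK (pOK_restrict hc)
  calc wsum i k q (m+1)
      = ∑ x : Fin n × (Fin m → Fin n),
          (if pOK i k ((Fin.snocEquiv (fun _ : Fin (m+1) => Fin n)) x)
            then q ^ (pE i k ((Fin.snocEquiv (fun _ : Fin (m+1) => Fin n)) x)).card else 0) := by
        rw [wsum]
        exact (Fintype.sum_equiv (Fin.snocEquiv (fun _ : Fin (m+1) => Fin n)) _ _
          (fun x => rfl)).symm
    _ = ∑ w : Fin n, ∑ h : Fin m → Fin n,
          (if pOK i k (Fin.snoc h w : Fin (m+1) → Fin n)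
            then q ^ (pE i k (Fin.snoc h w : Fin (m+1) → Fin n)).card else 0) := by
        rw [Fintype.sum_prod_type]
        rfl
    _ = ∑ h : Fin m → Fin n, ∑ w : Fin n,
          (if pOK i k (Fin.snoc h w : Fin (m+1) → Fin n)
            then q ^ (pE i k (Fin.snoc h w : Fin (m+1) → Fin n)).card else 0) :=
        Finset.sum_comm
    _ ≤ ∑ h : Fin m → Fin n, (if pOK i k h then q ^ (pE i k h).card else 0) * C :=
        Finset.sum_le_sum fun h _ => key h
    _ = C * wsum i k q m := by rw [← Finset.sum_mul, wsum, mul_comm]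

lemma wsum_le_pow {q : ℝ≥0∞} (hq : q ≤ 1) {ℓ : ℕ} :
    ∀ m, m ≤ k * ℓ → wsum i k q m ≤ ((n : ℝ≥0∞) * q + 2 * ℓ) ^ m := by
  intro m
  induction m with
  | zero => intro _; rw [wsum_zero, pow_zero]
  | succ m ih =>
    intro hm
    calc wsum i k q (m+1)
        ≤ ((n : ℝ≥0∞) * q + 2 * ℓ) * wsum i k q m := wsum_succ hq (by omega)
      _ ≤ ((n : ℝ≥0∞) * q + 2 * ℓ) * ((n : ℝ≥0∞) * q + 2 * ℓ) ^ m :=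
          mul_le_mul_right (ih (by omega)) _
      _ = ((n : ℝ≥0∞) * q + 2 * ℓ) ^ (m+1) := (pow_succ' _ _).symm

end ErdosRenyiAux
end Part3

section Part4
namespace ErdosRenyiAux
open scoped ENNReal
variable {n : ℕ}

lemma nat_tks_div {k t s : ℕ} (hk : 0 < k) (hs : s < k) : (t*k+s)/k = t := by
  rw [show t*k+s = k*t+s by ring, Nat.mul_add_div hk, Nat.div_eq_of_lt hs, Nat.add_zero]

lemma nat_tks_mod {k t s : ℕ} (hs : s < k) : (t*k+s)%k = s := by
  rw [show t*k+s = k*t+s by ring, Nat.mul_add_mod, Nat.mod_eq_of_lt hs]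

variable (i : Fin n) (k ℓ : ℕ)

/-- number of self-avoiding paths of length `k` from `i` in the graph given by `ω` -/
def S (ω : Sym2 (Fin n) → Bool) : ℕ :=
  (Finset.univ.filter fun f : Fin k → Fin n =>
    pOK i k f ∧ ∀ j, ω (pedge i k f j) = true).card

variable {i k ℓ}

lemma fin_kl_pos {k ℓ : ℕ} (j : Fin (k * ℓ)) : 0 < k := by
  rcases Nat.eq_zero_or_pos k with rfl|h
  · exact absurd j.isLt (by simp)
  · exact h

def blkF {k ℓ : ℕ} (j : Fin (k*ℓ)) : Fin ℓ :=
  ⟨j.1 / k, (Nat.div_lt_iff_lt_mul (fin_kl_pos j)).mpr (Nat.mul_comm k ℓ ▸ j.isLt)⟩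

def posF {k ℓ : ℕ} (j : Fin (k*ℓ)) : Fin k :=
  ⟨j.1 % k, Nat.mod_lt _ (fin_kl_pos j)⟩

/-- concatenate an `ℓ`-tuple of `k`-step sequences into one `k*ℓ`-step sequence -/
def glue (F : Fin ℓ → Fin k → Fin n) : Fin (k*ℓ) → Fin n := fun j => F (blkF j) (posF j)

lemma tks_lt {k ℓ : ℕ} (t : Fin ℓ) (s : Fin k) : t.1 * k + s.1 < k * ℓ := by
  have e : (t.1+1)*k = t.1*k + k := Nat.succ_mul _ _
  have h1 : t.1*k + s.1 < (t.1+1)*k := by have := s.isLt; omega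
  have h2 : (t.1+1)*k ≤ ℓ*k := Nat.mul_le_mul_right _ t.isLt
  calc t.1*k + s.1 < (t.1+1)*k := h1
    _ ≤ ℓ*k := h2
    _ = k*ℓ := Nat.mul_comm _ _

/-- split a `k*ℓ`-step sequence into an `ℓ`-tuple of `k`-step sequences -/
def split (g : Fin (k*ℓ) → Fin n) : Fin ℓ → Fin k → Fin n := fun t s =>
  g ⟨t.1 * k + s.1, tks_lt t s⟩

lemma blkF_tks (t : Fin ℓ) (s : Fin k) : blkF (⟨t.1*k+s.1, tks_lt t s⟩ : Fin (k*ℓ)) = t :=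
  Fin.ext (nat_tks_div (Nat.lt_of_le_of_lt (Nat.zero_le _) s.isLt) s.isLt)

lemma posF_tks (t : Fin ℓ) (s : Fin k) : posF (⟨t.1*k+s.1, tks_lt t s⟩ : Fin (k*ℓ)) = s :=
  Fin.ext (nat_tks_mod s.isLt)

lemma glue_apply (F : Fin ℓ → Fin k → Fin n) (t : Fin ℓ) (s : Fin k) :
    glue F ⟨t.1*k+s.1, tks_lt t s⟩ = F t s := by
  unfold glue
  rw [blkF_tks, posF_tks]

lemma glue_split (g : Fin (k*ℓ) → Fin n) : glue (split g) = g := by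
  funext j
  unfold glue split
  exact congrArg g (Fin.ext (Nat.div_add_mod' j.1 k))

lemma split_glue (F : Fin ℓ → Fin k → Fin n) : split (glue F) = F := by
  funext t s
  exact glue_apply F t s

lemma prevV_glue (F : Fin ℓ → Fin k → Fin n) (t : Fin ℓ) (s : Fin k) :
    prevV i k (glue F) ⟨t.1*k+s.1, tks_lt t s⟩ = prevV i k (F t) s := by
  have hk : 0 < k := Nat.lt_of_le_of_lt (Nat.zero_le _) s.isLt
  have hmod : (t.1*k+s.1) % k = s.1 := nat_tks_mod s.isLt
  have smod : s.1 % k = s.1 := Nat.mod_eq_of_lt s.isLt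
  unfold prevV
  rcases eq_or_ne s.1 0 with h0|h0
  · rw [if_pos (by rw [hmod]; exact h0), if_pos (by rw [smod]; exact h0)]
  · rw [if_neg (by rw [hmod]; exact h0), if_neg (by rw [smod]; exact h0)]
    have h2 : s.1 - 1 < k := by have := s.isLt; omega
    have h3 := glue_apply F t ⟨s.1 - 1, h2⟩
    rw [← h3]
    refine congrArg (glue F) (Fin.ext ?_)
    simp only
    omega

lemma pedge_glue (F : Fin ℓ → Fin k → Fin n) (t : Fin ℓ) (s : Fin k) :
    pedge i k (glue F) ⟨t.1*k+s.1, tks_lt t s⟩ = pedge i k (F t) s := by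
  unfold pedge
  rw [prevV_glue, glue_apply]

lemma pOK_glue_iff (F : Fin ℓ → Fin k → Fin n) :
    pOK i k (glue F) ↔ ∀ t, pOK i k (F t) := by
  constructor
  · intro H t
    constructor
    · intro s
      rw [← glue_apply F t s]; exact H.1 _
    · intro s s' _ he
      rw [← glue_apply F t s, ← glue_apply F t s'] at he
      have hk : 0 < k := Nat.lt_of_le_of_lt (Nat.zero_le _) s.isLt
      have hb : (t.1*k+s.1)/k = (t.1*k+s'.1)/k := by
        rw [nat_tks_div hk s.isLt, nat_tks_div hk s'.isLt]
      have h4 := H.2 _ _ hb he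
      have := congrArg Fin.val h4
      simp only at this
      exact Fin.ext (by omega)
  · intro H
    constructor
    · intro j
      unfold glue
      exact (H _).1 _
    · intro j j' hb he
      have hk := fin_kl_pos j
      unfold glue at he
      have hb' : blkF j = blkF j' := Fin.ext hb
      rw [hb'] at he
      have hmb : (posF j).1 / k = (posF j').1 / k := by
        unfold posF
        simp only
        rw [Nat.div_eq_of_lt (Nat.mod_lt _ hk), Nat.div_eq_of_lt (Nat.mod_lt _ hk)]
      have h4 := (H _).2 _ _ hmb he
      have hv := congrArg Fin.val h4
      unfold posF at hv
      simp only at hv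
      have d1 := Nat.div_add_mod j.1 k
      have d2 := Nat.div_add_mod j'.1 k
      rw [hb] at d1
      exact Fin.ext (by omega)

lemma S_pow (ω : Sym2 (Fin n) → Bool) :
    (S i k ω)^ℓ = (Finset.univ.filter fun g : Fin (k*ℓ) → Fin n =>
      pOK i k g ∧ ∀ j, ω (pedge i k g j) = true).card := by
  classical
  have h1 : (S i k ω)^ℓ
      = (Fintype.piFinset fun _ : Fin ℓ => Finset.univ.filter fun f : Fin k → Fin n =>
          pOK i k f ∧ ∀ j, ω (pedge i k f j) = true).card := by
    rw [Fintype.card_piFinset, Finset.prod_const, Finset.card_univ, Fintype.card_fin, S]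
  rw [h1]
  refine Finset.card_bij' (fun F _ => glue F) (fun g _ => split g) ?_ ?_ ?_ ?_
  · intro F hF
    rw [Fintype.mem_piFinset] at hF
    rw [Finset.mem_filter]
    refine ⟨Finset.mem_univ _, ?_, ?_⟩
    · exact (pOK_glue_iff F).mpr fun t => ((Finset.mem_filter.mp (hF t)).2).1
    · intro j
      have hj : j = (⟨(blkF j).1 * k + (posF j).1, tks_lt _ _⟩ : Fin (k*ℓ)) :=
        Fin.ext (by unfold blkF posF; simpa using (Nat.div_add_mod' j.1 k).symm)
      rw [hj, pedge_glue]
      exact ((Finset.mem_filter.mp (hF _)).2).2 _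
  · intro g hg
    rw [Finset.mem_filter] at hg
    rw [Fintype.mem_piFinset]
    intro t
    rw [Finset.mem_filter]
    have hgl : glue (split g) = g := glue_split g
    refine ⟨Finset.mem_univ _, ?_, ?_⟩
    · exact (pOK_glue_iff (split g)).mp (by rw [hgl]; exact hg.2.1) t
    · intro s
      rw [← pedge_glue (split g) t s, hgl]
      exact hg.2.2 _
  · intro F _; exact split_glue F
  · intro g _; exact glue_split g

end ErdosRenyiAux
end Part4

section Part5
namespace ErdosRenyiAux
open MeasureTheory ProbabilityTheory
open scoped ENNReal
variable {n : ℕ} {i : Fin n} {k ℓ : ℕ}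

lemma pedge_not_isDiag {m : ℕ} {g : Fin m → Fin n} (hOK : pOK i k g) (j : Fin m) :
    ¬ (pedge i k g j).IsDiag := by
  unfold pedge
  rw [Sym2.mk_isDiag_iff]
  exact prevV_ne hOK j

variable {p : ℝ} {P : Measure (Sym2 (Fin n) → Bool)} [IsProbabilityMeasure P]

lemma lintegral_S_pow
    (hindep : iIndepFun (fun e (ω : Sym2 (Fin n) → Bool) => ω e) P)
    (hp : ∀ e : Sym2 (Fin n), ¬ e.IsDiag → P {ω | ω e = true} = ENNReal.ofReal p) :
    ∫⁻ ω, ((S i k ω : ℕ) : ℝ≥0∞)^ℓ ∂P = wsum i k (ENNReal.ofReal p) (k*ℓ) := by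
  classical
  have hpt : ∀ ω : Sym2 (Fin n) → Bool, ((S i k ω : ℕ) : ℝ≥0∞)^ℓ
      = ∑ g : Fin (k*ℓ) → Fin n,
          (if pOK i k g ∧ ∀ j, ω (pedge i k g j) = true then (1:ℝ≥0∞) else 0) := by
    intro ω
    have h1 : ((S i k ω : ℕ) : ℝ≥0∞)^ℓ = ((S i k ω ^ ℓ : ℕ) : ℝ≥0∞) := by push_cast; ring
    rw [h1, S_pow]
    simp [Finset.sum_boole]
  rw [lintegral_congr hpt]
  rw [lintegral_finset_sum _ (fun g _ => measurable_of_countable _)]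
  rw [wsum]
  refine Finset.sum_congr rfl fun g _ => ?_
  by_cases hOK : pOK i k g
  · rw [if_pos hOK]
    have h2 : ∀ ω : Sym2 (Fin n) → Bool,
        (if pOK i k g ∧ ∀ j, ω (pedge i k g j) = true then (1:ℝ≥0∞) else 0)
        = Set.indicator {ω : Sym2 (Fin n) → Bool | ∀ j, ω (pedge i k g j) = true}
            (fun _ => 1) ω := by
      intro ω
      by_cases h : ∀ j, ω (pedge i k g j) = true
      · simp [hOK, h, Set.indicator]
      · simp [hOK, h, Set.indicator]
    rw [lintegral_congr h2,
      lintegral_indicator ((Set.to_countable _).measurableSet) _, setLIntegral_one _]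
    have hev : {ω : Sym2 (Fin n) → Bool | ∀ j, ω (pedge i k g j) = true}
        = ⋂ e : Sym2 (Fin n),
            (if e ∈ pE i k g then {ω : Sym2 (Fin n) → Bool | ω e = true} else Set.univ) := by
      ext ω
      simp only [Set.mem_iInter, Set.mem_setOf_eq]
      constructor
      · intro h e
        split_ifs with he
        · obtain ⟨j, -, rfl⟩ := Finset.mem_image.mp he
          exact h j
        · trivial
      · intro h j
        have hm : pedge i k g j ∈ pE i k g :=
          Finset.mem_image.mpr ⟨j, Finset.mem_univ _, rfl⟩
        have h3 := h (pedge i k g j)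
        rw [if_pos hm] at h3
        exact h3
    have hmeasE : ∀ e : Sym2 (Fin n),
        MeasurableSet[MeasurableSpace.comap (fun ω : Sym2 (Fin n) → Bool => ω e)
          (inferInstance : MeasurableSpace Bool)]
          (if e ∈ pE i k g then {ω : Sym2 (Fin n) → Bool | ω e = true} else Set.univ) := by
      intro e
      split_ifs with he
      · exact ⟨{true}, trivial, rfl⟩
      · exact ⟨Set.univ, trivial, by simp⟩
    rw [hev, hindep.meas_iInter hmeasE]
    have h4 : ∀ e : Sym2 (Fin n),
        P (if e ∈ pE i k g then {ω : Sym2 (Fin n) → Bool | ω e = true} else Set.univ)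
        = (if e ∈ pE i k g then ENNReal.ofReal p else 1) := by
      intro e
      split_ifs with he
      · obtain ⟨j, -, rfl⟩ := Finset.mem_image.mp he
        exact hp _ (pedge_not_isDiag hOK j)
      · exact measure_univ
    rw [Finset.prod_congr rfl fun e _ => h4 e]
    rw [Finset.prod_ite_mem, Finset.univ_inter, Finset.prod_const]
  · rw [if_neg hOK]
    have h2 : (fun ω : Sym2 (Fin n) → Bool =>
        (if pOK i k g ∧ ∀ j, ω (pedge i k g j) = true then (1:ℝ≥0∞) else 0))
        = fun _ => 0 := by
      funext ω
      simp [hOK]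
    rw [h2, lintegral_zero]

end ErdosRenyiAux
end Part5

section Part6
namespace ErdosRenyiAux
open SimpleGraph
variable {n : ℕ}

lemma isPath_getVert_inj {V : Type*} {G : SimpleGraph V} {u v : V} {q : G.Walk u v}
    (hq : q.IsPath) : ∀ a, a ≤ q.length → ∀ b, b ≤ q.length →
      q.getVert a = q.getVert b → a = b := by
  induction q with
  | nil => intro a ha b hb _; simp at ha hb; omega
  | @cons u x v h q ih =>
    rw [Walk.cons_isPath_iff] at hq
    intro a ha b hb he
    match a, b with
    | 0, 0 => rfl
    | 0, b+1 =>
      rw [Walk.getVert_zero, Walk.getVert_cons_succ] at he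
      exact absurd (Walk.mem_support_iff_exists_getVert.mpr
        ⟨b, he.symm, by simpa using hb⟩) hq.2
    | a+1, 0 =>
      rw [Walk.getVert_zero, Walk.getVert_cons_succ] at he
      exact absurd (Walk.mem_support_iff_exists_getVert.mpr
        ⟨a, he, by simpa using ha⟩) hq.2
    | a+1, b+1 =>
      rw [Walk.getVert_cons_succ, Walk.getVert_cons_succ] at he
      have := ih hq.1 a (by simpa using ha) b (by simpa using hb) he
      omega

variable {i : Fin n}

/-- extract the endpoint from the encoded path -/
def vend (i : Fin n) (x : (k : ℕ) × (Fin k → Fin n)) : Fin n :=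
  if h : x.1 = 0 then i else x.2 ⟨x.1 - 1, by omega⟩

open Classical in
/-- encode each vertex of the ball as a self-avoiding path -/
noncomputable def enc (ω : Sym2 (Fin n) → Bool) (i : Fin n) (r : ℕ) (v : Fin n) :
    (k : ℕ) × (Fin k → Fin n) :=
  if hv : ∃ q : (graphOf ω).Walk i v, q.length ≤ r then
    ⟨hv.choose.bypass.length, fun t => hv.choose.bypass.getVert (t.1+1)⟩
  else ⟨0, Fin.elim0⟩

lemma vend_enc (ω : Sym2 (Fin n) → Bool) (r : ℕ) (v : Fin n)
    (hv : ∃ q : (graphOf ω).Walk i v, q.length ≤ r) : vend i (enc ω i r v) = v := by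
  rw [enc, dif_pos hv]
  show vend i ⟨hv.choose.bypass.length, fun t => hv.choose.bypass.getVert (t.1+1)⟩ = v
  set q := hv.choose.bypass with hqd
  unfold vend
  split_ifs with h0
  · have h0' : q.length = 0 := h0
    have h2 := q.getVert_length
    rw [h0'] at h2
    exact (h2.symm.trans q.getVert_zero).symm
  · have h0' : q.length ≠ 0 := h0
    show q.getVert (q.length - 1 + 1) = v
    rw [show q.length - 1 + 1 = q.length by omega, q.getVert_length]

open Classical in
lemma ncard_ball_le (ω : Sym2 (Fin n) → Bool) (i : Fin n) (r : ℕ) :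
    (_root_.ball (graphOf ω) i r).ncard ≤ ∑ k ∈ Finset.range (r+1), S i k ω := by
  have hfin : (_root_.ball (graphOf ω) i r).Finite := Set.toFinite _
  rw [Set.ncard_eq_toFinset_card _ hfin]
  have hcard : (∑ k ∈ Finset.range (r+1), S i k ω)
      = ((Finset.range (r+1)).sigma (fun k => Finset.univ.filter fun f : Fin k → Fin n =>
          pOK i k f ∧ ∀ j, ω (pedge i k f j) = true)).card := by
    rw [Finset.card_sigma]
    exact Finset.sum_congr rfl fun k _ => rfl
  rw [hcard]
  refine Finset.card_le_card_of_injOn (enc ω i r) ?_ ?_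
  · intro v hv'
    have hv : ∃ q : (graphOf ω).Walk i v, q.length ≤ r := hfin.mem_toFinset.mp hv'
    rw [enc, dif_pos hv]
    set q := hv.choose.bypass with hqd
    have hq : q.IsPath := hv.choose.bypass_isPath
    have hlen : q.length ≤ r := le_trans hv.choose.length_bypass_le hv.choose_spec
    rw [Finset.mem_coe, Finset.mem_sigma]
    set L := q.length with hL
    set f : Fin L → Fin n := fun t => q.getVert (t.1+1) with hfd
    have hinj := isPath_getVert_inj hq
    constructor
    · exact Finset.mem_range.mpr (Nat.lt_succ_of_le hlen)
    · show f ∈ Finset.univ.filter fun f : Fin L → Fin n =>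
        pOK i L f ∧ ∀ j, ω (pedge i L f j) = true
      rw [Finset.mem_filter]
      refine ⟨Finset.mem_univ _, ⟨?_, ?_⟩, ?_⟩
      · intro t ht
        have ht' : q.getVert (t.1+1) = q.getVert 0 := by rw [q.getVert_zero]; exact ht
        have : t.1 + 1 = 0 := hinj _ (by have := t.isLt; omega) 0 (by omega) ht'
        omega
      · intro t t' _ he
        have : t.1 + 1 = t'.1 + 1 := hinj _ (by have := t.isLt; omega) _
          (by have := t'.isLt; omega) he
        exact Fin.ext (by omega)
      · intro t
        have hadj : (graphOf ω).Adj (q.getVert t.1) (q.getVert (t.1+1)) :=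
          q.adj_getVert_succ t.isLt
        have hprev : prevV i L f t = q.getVert t.1 := by
          unfold prevV
          have hmod : t.1 % L = t.1 := Nat.mod_eq_of_lt t.isLt
          rcases eq_or_ne t.1 0 with h0|h0
          · rw [if_pos (by rw [hmod]; exact h0), h0, q.getVert_zero]
          · rw [if_neg (by rw [hmod]; exact h0)]
            show q.getVert (t.1 - 1 + 1) = q.getVert t.1
            exact congrArg q.getVert (by omega)
        unfold pedge
        rw [hprev]
        exact hadj.2
  · intro v1 hv1 v2 hv2 he
    have h1 : vend i (enc ω i r v1) = v1 :=
      vend_enc ω r v1 (hfin.mem_toFinset.mp (Finset.mem_coe.mp hv1))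
    have h2 : vend i (enc ω i r v2) = v2 :=
      vend_enc ω r v2 (hfin.mem_toFinset.mp (Finset.mem_coe.mp hv2))
    rw [← h1, ← h2, he]

end ErdosRenyiAux
end Part6

section Part7
namespace ErdosRenyiAux
open MeasureTheory ProbabilityTheory Real
open scoped ENNReal

lemma lint_rpow_sum_le {Ω : Type*} [MeasurableSpace Ω] (P : Measure Ω) {ℓr : ℝ}
    (hℓ : 1 ≤ ℓr) (s : Finset ℕ) (f : ℕ → Ω → ℝ≥0∞) (hf : ∀ k, Measurable (f k)) :
    (∫⁻ ω, (∑ k ∈ s, f k ω) ^ ℓr ∂P) ^ (1/ℓr)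
      ≤ ∑ k ∈ s, (∫⁻ ω, (f k ω) ^ ℓr ∂P) ^ (1/ℓr) := by
  classical
  induction s using Finset.induction with
  | empty =>
    simp only [Finset.sum_empty]
    rw [ENNReal.zero_rpow_of_pos (by linarith), lintegral_zero,
      ENNReal.zero_rpow_of_pos (by positivity)]
  | @insert a s ha ih =>
    have hsum : ∀ ω, (∑ k ∈ insert a s, f k ω) = f a ω + ∑ k ∈ s, f k ω := fun ω =>
      Finset.sum_insert ha
    calc (∫⁻ ω, (∑ k ∈ insert a s, f k ω) ^ ℓr ∂P) ^ (1/ℓr)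
        = (∫⁻ ω, (f a ω + ∑ k ∈ s, f k ω) ^ ℓr ∂P) ^ (1/ℓr) := by
          congr 1
          exact lintegral_congr fun ω => by rw [hsum ω]
      _ ≤ (∫⁻ ω, (f a ω) ^ ℓr ∂P) ^ (1/ℓr)
            + (∫⁻ ω, (∑ k ∈ s, f k ω) ^ ℓr ∂P) ^ (1/ℓr) :=
          ENNReal.lintegral_Lp_add_le (hf a).aemeasurable
            (Finset.measurable_sum s fun k _ => hf k).aemeasurable hℓ
      _ ≤ (∫⁻ ω, (f a ω) ^ ℓr ∂P) ^ (1/ℓr)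
            + ∑ k ∈ s, (∫⁻ ω, (f k ω) ^ ℓr ∂P) ^ (1/ℓr) := add_le_add le_rfl ih
      _ = ∑ k ∈ insert a s, (∫⁻ ω, (f k ω) ^ ℓr ∂P) ^ (1/ℓr) := by
          rw [Finset.sum_insert ha]

lemma A_facts (n ℓ : ℕ) (hn : 1 ≤ n) (hℓ : 1 ≤ ℓ) (p : ℝ) (hp0 : 0 ≤ p) (hp1 : p ≤ 1) :
    3 ≤ Aconst (n*p) ℓ ∧ (n:ℝ)*p + 2*ℓ ≤ Aconst (n*p) ℓ := by
  have hπ : (3:ℝ) < π := Real.pi_gt_three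
  have he1 : (2:ℝ) < Real.exp 1 := by
    have := Real.exp_one_gt_d9; linarith
  have he2 : Real.exp 1 < 3 := by
    have := Real.exp_one_lt_d9; linarith
  have hexp : (1:ℝ) ≤ Real.exp (Real.exp 1 - 2) := by
    have h := Real.add_one_le_exp (Real.exp 1 - 2)
    linarith
  have hE : (3:ℝ) ≤ π * Real.exp (Real.exp 1 - 2) := by nlinarith
  have hlog_pos : 0 < Real.log (Real.exp 1 - 1) := Real.log_pos (by linarith)
  have hlog_le1 : Real.log (Real.exp 1 - 1) ≤ 1 := by
    have := Real.log_le_sub_one_of_pos (show (0:ℝ) < Real.exp 1 - 1 by linarith)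
    linarith
  have hℓ1 : (1:ℝ) ≤ (ℓ:ℝ) := by exact_mod_cast hℓ
  set E := π * Real.exp (Real.exp 1 - 2) with hEd
  rw [Aconst]
  split_ifs with h
  · -- np < ℓ : A = E * ℓ / log (e - 1)
    have h3 : E * ℓ ≤ E * ℓ / Real.log (Real.exp 1 - 1) := by
      rw [le_div_iff₀ hlog_pos]
      have hEl : (0:ℝ) ≤ E * ℓ := by nlinarith
      nlinarith [mul_le_mul_of_nonneg_left hlog_le1 hEl]
    constructor
    · nlinarith
    · nlinarith
  · -- ℓ ≤ np : A = E * (np)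
    push_neg at h
    have hnp1 : (1:ℝ) ≤ (n:ℝ)*p := le_trans hℓ1 h
    constructor
    · nlinarith
    · nlinarith

end ErdosRenyiAux
end Part7

open ErdosRenyiAux in
open scoped ENNReal NNReal in
/-- **Lemma (neighbourhood moment bound)**: in an Erdős–Rényi random graph with edge
probability `p`, the number `N_r` of vertices within distance `r` of a fixed vertex
satisfies `‖N_r‖_ℓ ≤ (A(np,ℓ)^{r+1} − 1)/(A(np,ℓ) − 1) ≤ 2 A(np,ℓ)^r`. -/
theorem stmt_19 (n r ℓ : ℕ) (hn : 1 ≤ n) (hr : 1 ≤ r) (hℓ : 1 ≤ ℓ)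
    (p : ℝ) (hp0 : 0 ≤ p) (hp1 : p ≤ 1)
    (P : Measure (Sym2 (Fin n) → Bool)) [IsProbabilityMeasure P]
    (hindep : iIndepFun (fun e ω => ω e) P)
    (hp : ∀ e : Sym2 (Fin n), ¬ e.IsDiag → P {ω | ω e = true} = ENNReal.ofReal p)
    (i : Fin n) :
    (∫ ω, ((ball (graphOf ω) i r).ncard : ℝ) ^ ℓ ∂P) ^ ((ℓ : ℝ)⁻¹)
        ≤ (Aconst (n * p) ℓ ^ (r + 1) - 1) / (Aconst (n * p) ℓ - 1)
    ∧ (Aconst (n * p) ℓ ^ (r + 1) - 1) / (Aconst (n * p) ℓ - 1)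
        ≤ 2 * Aconst (n * p) ℓ ^ r := by
  classical
  obtain ⟨hA3, hAnp⟩ := A_facts n ℓ hn hℓ p hp0 hp1
  set A := Aconst (↑n * p) ℓ with hA
  have hA1 : (1:ℝ) ≤ A := by linarith
  have hApow : (1:ℝ) ≤ A ^ r := one_le_pow₀ hA1
  have hsecond : (A ^ (r+1) - 1) / (A - 1) ≤ 2 * A ^ r := by
    rw [div_le_iff₀ (by linarith : (0:ℝ) < A - 1)]
    have hps : A ^ (r+1) = A ^ r * A := pow_succ A r
    nlinarith
  refine ⟨?_, hsecond⟩
  have hℓne : ((ℓ:ℝ)) ≠ 0 := by positivity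
  have hℓr1 : (1:ℝ) ≤ (ℓ:ℝ) := by exact_mod_cast hℓ
  have hq1 : ENNReal.ofReal p ≤ 1 := ENNReal.ofReal_le_one.mpr hp1
  set q : ℝ≥0∞ := ENNReal.ofReal p with hqd
  set C : ℝ := (A ^ (r+1) - 1) / (A - 1) with hCd
  have hps2 : A ^ (r+1) = A ^ r * A := pow_succ A r
  have hC0 : 0 ≤ C := div_nonneg (by nlinarith) (by linarith)
  -- rewrite the Bochner integral as a lower Lebesgue integral
  have hInt : (∫ ω, ((ball (graphOf ω) i r).ncard : ℝ) ^ ℓ ∂P)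
      = (∫⁻ ω, ((ball (graphOf ω) i r).ncard : ℝ≥0∞) ^ ℓ ∂P).toReal := by
    rw [integral_eq_lintegral_of_nonneg_ae (ae_of_all _ fun ω => by positivity)
      ((measurable_of_countable _).aestronglyMeasurable)]
    congr 1
    apply lintegral_congr
    intro ω
    rw [ENNReal.ofReal_pow (by positivity), ENNReal.ofReal_natCast]
  -- bound on B
  have hBA : (n : ℝ≥0∞) * q + 2 * (ℓ:ℕ) ≤ ENNReal.ofReal A := by
    have hB : (n : ℝ≥0∞) * q + 2 * (ℓ:ℕ) = ENNReal.ofReal ((n:ℝ)*p + 2*(ℓ:ℝ)) := by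
      rw [ENNReal.ofReal_add (by positivity) (by positivity),
        ENNReal.ofReal_mul (by positivity), ENNReal.ofReal_mul (by norm_num),
        ENNReal.ofReal_natCast, ENNReal.ofReal_natCast, ENNReal.ofReal_ofNat]
    rw [hB]
    exact ENNReal.ofReal_le_ofReal hAnp
  -- per-k moment bound
  have hperk : ∀ k : ℕ, (∫⁻ ω, (((S i k ω : ℕ)):ℝ≥0∞) ^ ((ℓ:ℝ)) ∂P) ^ (1/(ℓ:ℝ))
      ≤ (ENNReal.ofReal A) ^ k := by
    intro k
    have e1 : ∀ ω : Sym2 (Fin n) → Bool,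
        (((S i k ω : ℕ)):ℝ≥0∞) ^ ((ℓ:ℝ)) = (((S i k ω : ℕ)):ℝ≥0∞) ^ (ℓ:ℕ) :=
      fun ω => ENNReal.rpow_natCast _ ℓ
    rw [lintegral_congr e1, lintegral_S_pow hindep hp]
    have h2 : wsum i k q (k*ℓ) ≤ ((n : ℝ≥0∞) * q + 2 * (ℓ:ℕ)) ^ (k*ℓ) :=
      wsum_le_pow hq1 _ le_rfl
    calc (wsum i k q (k*ℓ)) ^ (1/(ℓ:ℝ))
        ≤ (((n : ℝ≥0∞) * q + 2 * (ℓ:ℕ)) ^ (k*ℓ)) ^ (1/(ℓ:ℝ)) :=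
          ENNReal.rpow_le_rpow h2 (by positivity)
      _ = ((n : ℝ≥0∞) * q + 2 * (ℓ:ℕ)) ^ k := by
          rw [pow_mul, ← ENNReal.rpow_natCast (((n : ℝ≥0∞) * q + 2 * (ℓ:ℕ)) ^ k) ℓ,
            ← ENNReal.rpow_mul, mul_one_div, div_self hℓne, ENNReal.rpow_one]
      _ ≤ (ENNReal.ofReal A) ^ k := pow_le_pow_left' hBA k
  -- the geometric sum
  have hsumA : ∑ k ∈ Finset.range (r+1), (ENNReal.ofReal A)^k = ENNReal.ofReal C := by
    have h1 : ∀ k, (ENNReal.ofReal A)^k = ENNReal.ofReal (A^k) :=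
      fun k => (ENNReal.ofReal_pow (by linarith : (0:ℝ) ≤ A) k).symm
    rw [Finset.sum_congr rfl fun k _ => h1 k,
      ← ENNReal.ofReal_sum_of_nonneg (fun k _ => by positivity)]
    rw [hCd]
    congr 1
    rw [geom_sum_eq (by linarith : A ≠ 1)]
  -- main chain
  have hmain : (∫⁻ ω, ((ball (graphOf ω) i r).ncard : ℝ≥0∞) ^ ℓ ∂P) ^ (1/(ℓ:ℝ))
      ≤ ENNReal.ofReal C := by
    calc (∫⁻ ω, ((ball (graphOf ω) i r).ncard : ℝ≥0∞) ^ ℓ ∂P) ^ (1/(ℓ:ℝ))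
        ≤ (∫⁻ ω, (∑ k ∈ Finset.range (r+1), ((S i k ω : ℕ):ℝ≥0∞)) ^ ((ℓ:ℝ)) ∂P)
            ^ (1/(ℓ:ℝ)) := by
          refine ENNReal.rpow_le_rpow (lintegral_mono fun ω => ?_) (by positivity)
          rw [← ENNReal.rpow_natCast (((ball (graphOf ω) i r).ncard : ℝ≥0∞)) ℓ]
          refine ENNReal.rpow_le_rpow ?_ (by positivity)
          have h1 := ncard_ball_le ω i r
          have h2 := (Nat.cast_le (α := ℝ≥0∞)).mpr h1
          rwa [Nat.cast_sum] at h2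
      _ ≤ ∑ k ∈ Finset.range (r+1), (∫⁻ ω, (((S i k ω : ℕ)):ℝ≥0∞) ^ ((ℓ:ℝ)) ∂P)
            ^ (1/(ℓ:ℝ)) :=
          lint_rpow_sum_le P hℓr1 _ _ (fun k => measurable_of_countable _)
      _ ≤ ∑ k ∈ Finset.range (r+1), (ENNReal.ofReal A) ^ k :=
          Finset.sum_le_sum fun k _ => hperk k
      _ = ENNReal.ofReal C := hsumA
  -- conclude in ℝ
  set I : ℝ≥0∞ := ∫⁻ ω, ((ball (graphOf ω) i r).ncard : ℝ≥0∞) ^ ℓ ∂P with hId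
  have hIle : I ≤ ENNReal.ofReal (C ^ ((ℓ:ℝ))) := by
    have h0 : I = (I ^ (1/(ℓ:ℝ))) ^ ((ℓ:ℝ)) := by
      rw [← ENNReal.rpow_mul, one_div, inv_mul_cancel₀ hℓne, ENNReal.rpow_one]
    rw [h0]
    calc (I ^ (1/(ℓ:ℝ))) ^ ((ℓ:ℝ)) ≤ (ENNReal.ofReal C) ^ ((ℓ:ℝ)) :=
          ENNReal.rpow_le_rpow hmain (by positivity)
      _ = ENNReal.ofReal (C ^ ((ℓ:ℝ))) := ENNReal.ofReal_rpow_of_nonneg hC0 (by positivity)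
  have htr : I.toReal ≤ C ^ ((ℓ:ℝ)) := by
    have h3 := ENNReal.toReal_mono (ENNReal.ofReal_ne_top) hIle
    rwa [ENNReal.toReal_ofReal (by positivity)] at h3
  rw [hInt]
  calc (I.toReal) ^ ((ℓ:ℝ)⁻¹)
      ≤ (C ^ ((ℓ:ℝ)))^((ℓ:ℝ)⁻¹) :=
        Real.rpow_le_rpow ENNReal.toReal_nonneg htr (by positivity)
    _ = C := by
        rw [← Real.rpow_mul hC0, mul_inv_cancel₀ hℓne, Real.rpow_one]
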